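/- Fix an integer n ≥ 2 and integers i, j with 1 ≤ i, j ≤ n − 1. Then the following identity holds in ℤ[q, q⁻¹]: (1 − q^{2n})·c_{ij}(q) = [n]_q·(P_{ij}(q) − qⁿ·P_{i,n−j}(q)), where c_{kl}(q) := [n − max(k,l)]_q·[min(k,l)]_q and P_{kl}(q) := Σ_{b = max(k+l+1−n, 1)}^{min(k, l)} q^{k+l+1−2b}. Consequently, the expansion of the rational function v_{ij}(q) := c_{ij}(q)/[n]_q as a formal Laurent series at q = 0 has no nonzero coefficients in negative degrees, and for every integer s with 1 ≤ s ≤ n − 1 its coefficient of q^s equals 1 if s = i + j + 1 − 2b for some integer b with max(i+j+1−n, 1) ≤ b ≤ min(i, j), and equals 0 otherwise. -/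

import Mathlib

noncomputable section

open LaurentPolynomial

/-- The quantum integer `[m]_q` as a Laurent polynomial over `ℤ`. -/
def qIntL (m : ℕ) : LaurentPolynomial ℤ :=
  ∑ k ∈ Finset.range m, T ((m : ℤ) - 1 - 2 * (k : ℤ))

/-- The entries `c_{kl}(q) = [n − max(k,l)]_q·[min(k,l)]_q` of `[n]_q·B(q)⁻¹` for `sl_n`. -/
def cEntry (n k l : ℕ) : LaurentPolynomial ℤ :=
  qIntL (n - max k l) * qIntL (min k l)

/-- `P_{kl}(q) = Σ_{b = max(k+l+1−n,1)}^{min(k,l)} q^{k+l+1−2b}`. -/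
def pEntry (n k l : ℕ) : LaurentPolynomial ℤ :=
  ∑ b ∈ Finset.Icc (max (k + l + 1 - n) 1) (min k l), T ((k : ℤ) + (l : ℤ) + 1 - 2 * (b : ℤ))

/-- The quantum integer `[m]_q` as a formal Laurent series over `ℚ`. -/
def qIntS (m : ℕ) : LaurentSeries ℚ :=
  ∑ k ∈ Finset.range m, HahnSeries.single ((m : ℤ) - 1 - 2 * (k : ℤ)) (1 : ℚ)

/-- The entries `c_{kl}(q)` as formal Laurent series over `ℚ`. -/
def cEntryS (n k l : ℕ) : LaurentSeries ℚ :=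
  qIntS (n - max k l) * qIntS (min k l)

lemma tele_qIntL (m : ℕ) : (T 1 - T (-1) : LaurentPolynomial ℤ) * qIntL m = T (m:ℤ) - T (-(m:ℤ)) := by
  rw [qIntL, Finset.mul_sum]
  have h : ∀ k ∈ Finset.range m, (T 1 - T (-1) : LaurentPolynomial ℤ) * T ((m : ℤ) - 1 - 2 * (k : ℤ))
      = T ((m:ℤ) - 2*(k:ℤ)) - T ((m:ℤ) - 2*((k:ℤ)+1)) := by
    intro k _
    rw [sub_mul, ← T_add, ← T_add]; ring_nf
  rw [Finset.sum_congr rfl h]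
  have := Finset.sum_range_sub' (f := fun k : ℕ => (T ((m:ℤ) - 2*(k:ℤ)) : LaurentPolynomial ℤ)) m
  push_cast at this
  rw [this]; ring_nf

lemma tele_Icc {M : Type*} [AddCommGroup M] (f : ℕ → M) (lo hi : ℕ) (h : lo ≤ hi) :
    ∑ b ∈ Finset.Icc lo hi, (f b - f (b+1)) = f lo - f (hi+1) := by
  induction hi, h using Nat.le_induction with
  | base => simp
  | succ m hm ih =>
      rw [Finset.sum_Icc_succ_top (by omega), ih]
      abel

lemma tele_pEntry (n k l : ℕ) (h : max (k + l + 1 - n) 1 ≤ min k l) :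
    (T 1 - T (-1) : LaurentPolynomial ℤ) * pEntry n k l
      = T ((k:ℤ) + l + 2 - 2 * (max (k + l + 1 - n) 1 : ℕ))
        - T ((k:ℤ) + l - 2 * (min k l : ℕ)) := by
  rw [pEntry, Finset.mul_sum]
  have h2 : ∀ b ∈ Finset.Icc (max (k + l + 1 - n) 1) (min k l),
      (T 1 - T (-1) : LaurentPolynomial ℤ) * T ((k : ℤ) + (l : ℤ) + 1 - 2 * (b : ℤ))
      = T ((k:ℤ) + l + 2 - 2*(b:ℤ)) - T ((k:ℤ) + l + 2 - 2*((b:ℤ)+1)) := by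
    intro b _
    rw [sub_mul, ← T_add, ← T_add]; ring_nf
  rw [Finset.sum_congr rfl h2]
  have := tele_Icc (f := fun b : ℕ => (T ((k:ℤ) + l + 2 - 2*(b:ℤ)) : LaurentPolynomial ℤ))
    _ _ h
  push_cast at this ⊢
  rw [this]; ring_nf

lemma d_ne_zero : (T 1 - T (-1) : LaurentPolynomial ℤ) ≠ 0 := by
  intro h
  rw [sub_eq_zero] at h
  have h1 : (T (1:ℤ) : LaurentPolynomial ℤ).coeff 1 = (T (-1 : ℤ) : LaurentPolynomial ℤ).coeff 1 := by
    exact congrArg (fun f : LaurentPolynomial ℤ => f.coeff 1) h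
  simp [T_apply] at h1

theorem keyId (n i j : ℕ) (hn : 2 ≤ n) (hi₁ : 1 ≤ i) (hi₂ : i ≤ n - 1) (hj₁ : 1 ≤ j)
    (hj₂ : j ≤ n - 1) :
    (1 - T (2 * (n : ℤ))) * cEntry n i j =
      qIntL n * (pEntry n i j - T (n : ℤ) * pEntry n i (n - j)) := by
  apply mul_left_cancel₀ (mul_ne_zero d_ne_zero d_ne_zero)
  have hP : max (i + j + 1 - n) 1 ≤ min i j := by omega
  have hP' : max (i + (n - j) + 1 - n) 1 ≤ min i (n - j) := by omega
  calc (T 1 - T (-1)) * (T 1 - T (-1)) * ((1 - T (2 * (n : ℤ))) * cEntry n i j)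
      = (1 - T (2 * (n : ℤ))) * (((T 1 - T (-1)) * qIntL (n - max i j))
          * ((T 1 - T (-1)) * qIntL (min i j))) := by rw [cEntry]; ring
    _ = (1 - T (2 * (n : ℤ))) * ((T ((n - max i j : ℕ) : ℤ) - T (-((n - max i j : ℕ) : ℤ)))
          * (T ((min i j : ℕ) : ℤ) - T (-((min i j : ℕ) : ℤ)))) := by
          rw [tele_qIntL, tele_qIntL]
    _ = ((T (n:ℤ) - T (-(n:ℤ))) *
          ((T ((i:ℤ) + j + 2 - 2 * (max (i + j + 1 - n) 1 : ℕ))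
            - T ((i:ℤ) + j - 2 * (min i j : ℕ)))
           - T (n:ℤ) * (T ((i:ℤ) + (n - j : ℕ) + 2 - 2 * (max (i + (n - j) + 1 - n) 1 : ℕ))
            - T ((i:ℤ) + (n - j : ℕ) - 2 * (min i (n - j) : ℕ))))) := by
          have hjn : ((n - j : ℕ) : ℤ) = (n:ℤ) - j := by omega
          rw [hjn]
          rcases le_or_gt i j with hij | hij <;> rcases le_or_gt (i + j) n with hs | hs
          · have c1 : ((min i j : ℕ) : ℤ) = i := by omega
            have c2 : ((n - max i j : ℕ) : ℤ) = (n:ℤ) - j := by omega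
            have c3 : ((max (i + j + 1 - n) 1 : ℕ) : ℤ) = 1 := by omega
            have c4 : ((min i (n - j) : ℕ) : ℤ) = i := by omega
            have c5 : ((max (i + (n - j) + 1 - n) 1 : ℕ) : ℤ) = 1 := by omega
            rw [c1, c2, c3, c4, c5]
            simp only [mul_sub, sub_mul, one_mul, mul_one, ← T_add]
            ring_nf
          · have c1 : ((min i j : ℕ) : ℤ) = i := by omega
            have c2 : ((n - max i j : ℕ) : ℤ) = (n:ℤ) - j := by omega
            have c3 : ((max (i + j + 1 - n) 1 : ℕ) : ℤ) = (i:ℤ) + j + 1 - n := by omega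
            have c4 : ((min i (n - j) : ℕ) : ℤ) = (n:ℤ) - j := by omega
            have c5 : ((max (i + (n - j) + 1 - n) 1 : ℕ) : ℤ) = 1 := by omega
            rw [c1, c2, c3, c4, c5]
            simp only [mul_sub, sub_mul, one_mul, mul_one, ← T_add]
            ring_nf
          · have c1 : ((min i j : ℕ) : ℤ) = j := by omega
            have c2 : ((n - max i j : ℕ) : ℤ) = (n:ℤ) - i := by omega
            have c3 : ((max (i + j + 1 - n) 1 : ℕ) : ℤ) = 1 := by omega
            have c4 : ((min i (n - j) : ℕ) : ℤ) = i := by omega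
            have c5 : ((max (i + (n - j) + 1 - n) 1 : ℕ) : ℤ) = (i:ℤ) + 1 - j := by omega
            rw [c1, c2, c3, c4, c5]
            simp only [mul_sub, sub_mul, one_mul, mul_one, ← T_add]
            ring_nf
          · have c1 : ((min i j : ℕ) : ℤ) = j := by omega
            have c2 : ((n - max i j : ℕ) : ℤ) = (n:ℤ) - i := by omega
            have c3 : ((max (i + j + 1 - n) 1 : ℕ) : ℤ) = (i:ℤ) + j + 1 - n := by omega
            have c4 : ((min i (n - j) : ℕ) : ℤ) = (n:ℤ) - j := by omega
            have c5 : ((max (i + (n - j) + 1 - n) 1 : ℕ) : ℤ) = (i:ℤ) + 1 - j := by omega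
            rw [c1, c2, c3, c4, c5]
            simp only [mul_sub, sub_mul, one_mul, mul_one, ← T_add]
            ring_nf
    _ = (T 1 - T (-1)) * (T 1 - T (-1)) *
          (qIntL n * (pEntry n i j - T (n : ℤ) * pEntry n i (n - j))) := by
          rw [show (T 1 - T (-1)) * (T 1 - T (-1)) *
              (qIntL n * (pEntry n i j - T (n : ℤ) * pEntry n i (n - j)))
            = ((T 1 - T (-1)) * qIntL n) * (((T 1 - T (-1)) * pEntry n i j)
              - T (n:ℤ) * ((T 1 - T (-1)) * pEntry n i (n - j))) from by ring,
            tele_qIntL, tele_pEntry n i j hP, tele_pEntry n i (n - j) hP']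

def pS (n k l : ℕ) : LaurentSeries ℚ :=
  ∑ b ∈ Finset.Icc (max (k + l + 1 - n) 1) (min k l),
    HahnSeries.single ((k : ℤ) + (l : ℤ) + 1 - 2 * (b : ℤ)) (1 : ℚ)

def phiMon : Multiplicative ℤ →* LaurentSeries ℚ where
  toFun := fun a => HahnSeries.single (Multiplicative.toAdd a) (1 : ℚ)
  map_one' := by
    show HahnSeries.single (0 : ℤ) (1 : ℚ) = 1
    exact HahnSeries.single_zero_one
  map_mul' := fun a b => by
    show HahnSeries.single (Multiplicative.toAdd a + Multiplicative.toAdd b) (1:ℚ) = _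
    rw [HahnSeries.single_mul_single, one_mul]

def phi : LaurentPolynomial ℤ →+* LaurentSeries ℚ :=
  ((AddMonoidAlgebra.lift ℤ (LaurentSeries ℚ) ℤ) phiMon).toRingHom

lemma phi_T (a : ℤ) : phi (T a) = HahnSeries.single a (1 : ℚ) := by
  show ((AddMonoidAlgebra.lift ℤ (LaurentSeries ℚ) ℤ) phiMon) (AddMonoidAlgebra.single a 1)
    = HahnSeries.single a (1 : ℚ)
  rw [AddMonoidAlgebra.lift_single]
  simp [phiMon, Algebra.smul_def]

lemma phi_qIntL (m : ℕ) : phi (qIntL m) = qIntS m := by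
  rw [qIntL, qIntS, map_sum]
  exact Finset.sum_congr rfl fun k _ => phi_T _

lemma phi_cEntry (n k l : ℕ) : phi (cEntry n k l) = cEntryS n k l := by
  rw [cEntry, cEntryS, map_mul, phi_qIntL, phi_qIntL]

lemma phi_pEntry (n k l : ℕ) : phi (pEntry n k l) = pS n k l := by
  rw [pEntry, pS, map_sum]
  exact Finset.sum_congr rfl fun b _ => phi_T _

lemma coeff_sum {α : Type*} (s : Finset α) (f : α → LaurentSeries ℚ) (g : ℤ) :
    (∑ a ∈ s, f a).coeff g = ∑ a ∈ s, (f a).coeff g :=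
  map_sum (HahnSeries.coeff.addMonoidHom g) f s

lemma qIntS_ne_zero (m : ℕ) (hm : 1 ≤ m) : qIntS m ≠ 0 := by
  intro h
  have h1 : (qIntS m).coeff ((m : ℤ) - 1) = 1 := by
    rw [qIntS, coeff_sum]
    rw [Finset.sum_eq_single 0]
    · simp
    · intro k hk hk0
      apply HahnSeries.coeff_single_of_ne
      simp only [Finset.mem_range] at hk
      omega
    · intro h0
      simp only [Finset.mem_range, not_lt] at h0
      omega
  rw [h] at h1
  simp at h1

lemma pS_coeff_nonpos (n k l : ℕ) (s : ℤ) (hs : s ≤ 0) : (pS n k l).coeff s = 0 := by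
  rw [pS, coeff_sum]
  apply Finset.sum_eq_zero
  intro b hb
  simp only [Finset.mem_Icc] at hb
  apply HahnSeries.coeff_single_of_ne
  omega

theorem laurent_identity_and_vij_coeffs_sln
    (n i j : ℕ) (hn : 2 ≤ n) (hi₁ : 1 ≤ i) (hi₂ : i ≤ n - 1) (hj₁ : 1 ≤ j) (hj₂ : j ≤ n - 1) :
    (1 - T (2 * (n : ℤ))) * cEntry n i j =
        qIntL n * (pEntry n i j - T (n : ℤ) * pEntry n i (n - j)) ∧
      (∀ s : ℤ, s < 0 → (cEntryS n i j / qIntS n).coeff s = 0) ∧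
      (∀ s : ℤ, 1 ≤ s → s ≤ (n : ℤ) - 1 →
        ((∃ b : ℤ, max ((i : ℤ) + (j : ℤ) + 1 - (n : ℤ)) 1 ≤ b ∧ b ≤ min (i : ℤ) (j : ℤ) ∧
            s = (i : ℤ) + (j : ℤ) + 1 - 2 * b) →
          (cEntryS n i j / qIntS n).coeff s = 1) ∧
        ((¬ ∃ b : ℤ, max ((i : ℤ) + (j : ℤ) + 1 - (n : ℤ)) 1 ≤ b ∧ b ≤ min (i : ℤ) (j : ℤ) ∧
            s = (i : ℤ) + (j : ℤ) + 1 - 2 * b) →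
          (cEntryS n i j / qIntS n).coeff s = 0)) := by
  have hkey := keyId n i j hn hi₁ hi₂ hj₁ hj₂
  set f := cEntryS n i j / qIntS n with hfdef
  have hq : qIntS n ≠ 0 := qIntS_ne_zero n (by omega)
  have hS : (1 - HahnSeries.single (2*(n:ℤ)) (1:ℚ)) * cEntryS n i j
      = qIntS n * (pS n i j - HahnSeries.single (n:ℤ) 1 * pS n i (n - j)) := by
    have h0 := congrArg phi hkey
    simpa only [map_mul, map_sub, map_one, phi_T, phi_qIntL, phi_cEntry, phi_pEntry] using h0
  set g := pS n i j - HahnSeries.single (n:ℤ) 1 * pS n i (n-j) with hgdef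
  have hfg : (1 - HahnSeries.single (2*(n:ℤ)) (1:ℚ)) * f = g := by
    have hc : f * qIntS n = cEntryS n i j := div_mul_cancel₀ _ hq
    apply mul_right_cancel₀ hq
    calc (1 - HahnSeries.single (2*(n:ℤ)) (1:ℚ)) * f * qIntS n
        = (1 - HahnSeries.single (2*(n:ℤ)) (1:ℚ)) * (f * qIntS n) := by ring
      _ = (1 - HahnSeries.single (2*(n:ℤ)) (1:ℚ)) * cEntryS n i j := by rw [hc]
      _ = qIntS n * g := hS
      _ = g * qIntS n := by ring
  have hrec : ∀ s : ℤ, f.coeff s = g.coeff s + f.coeff (s - 2*n) := by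
    intro s
    have h2 : f = g + HahnSeries.single (2*(n:ℤ)) (1:ℚ) * f := by rw [← hfg]; ring
    have h3 : (HahnSeries.single (2*(n:ℤ)) (1:ℚ) * f).coeff s = f.coeff (s - 2*n) := by
      have h4 := HahnSeries.coeff_single_mul_add (r := (1:ℚ)) (x := f) (b := 2*(n:ℤ))
        (a := s - 2*n)
      rw [show (s - 2*n) + (2*(n:ℤ)) = s by ring] at h4
      rw [h4, one_mul]
    calc f.coeff s = (g + HahnSeries.single (2*(n:ℤ)) (1:ℚ) * f).coeff s := by rw [← h2]
      _ = _ := by rw [HahnSeries.coeff_add, h3]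
  have hgle : ∀ s : ℤ, s ≤ (n:ℤ) - 1 → g.coeff s = (pS n i j).coeff s := by
    intro s hs
    rw [hgdef, HahnSeries.coeff_sub]
    have h3 : (HahnSeries.single ((n:ℤ)) (1:ℚ) * pS n i (n-j)).coeff s
        = (pS n i (n-j)).coeff (s - n) := by
      have h4 := HahnSeries.coeff_single_mul_add (r := (1:ℚ)) (x := pS n i (n-j)) (b := (n:ℤ))
        (a := s - n)
      rw [show (s - n) + (n:ℤ) = s by ring] at h4
      rw [h4, one_mul]
    rw [h3, pS_coeff_nonpos n i (n-j) (s - n) (by omega), sub_zero]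
  have hneg : ∀ s : ℤ, s ≤ 0 → f.coeff s = 0 := by
    intro s hs
    by_cases hf0 : f = 0
    · rw [hf0]; simp
    · have hord : 1 ≤ f.order := by
        by_contra hd
        push_neg at hd
        have h1 : f.coeff f.order ≠ 0 := fun h => hf0 (HahnSeries.coeff_order_eq_zero.mp h)
        have h2 : f.coeff (f.order - 2*n) = 0 :=
          HahnSeries.coeff_eq_zero_of_lt_order (by omega)
        rw [hrec f.order, hgle _ (by omega), pS_coeff_nonpos n i j f.order (by omega), h2] at h1
        simp at h1
      exact HahnSeries.coeff_eq_zero_of_lt_order (by omega)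
  have hmid : ∀ s : ℤ, 1 ≤ s → s ≤ (n:ℤ)-1 → f.coeff s = (pS n i j).coeff s := by
    intro s h1 h2
    rw [hrec s, hgle s h2, hneg (s - 2*n) (by omega), add_zero]
  refine ⟨hkey, fun s hs => hneg s (by omega), fun s h1 h2 => ⟨?_, ?_⟩⟩
  · rintro ⟨b, hb1, hb2, hb3⟩
    rw [hmid s h1 h2, pS, coeff_sum, Finset.sum_eq_single b.toNat]
    · rw [HahnSeries.coeff_single, if_pos (by omega)]
    · intro c hc hcb
      apply HahnSeries.coeff_single_of_ne
      simp only [Finset.mem_Icc] at hc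
      omega
    · intro hnb
      exfalso
      simp only [Finset.mem_Icc, not_and_or, not_le] at hnb
      omega
  · intro hex
    rw [hmid s h1 h2, pS, coeff_sum]
    apply Finset.sum_eq_zero
    intro b hb
    simp only [Finset.mem_Icc] at hb
    apply HahnSeries.coeff_single_of_ne
    intro hcc
    exact hex ⟨(b:ℤ), by omega, by omega, by omega⟩

end
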